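/- arXiv:1309.5116 — 3 statements merged into one kernel-verified Lean document; each statement's English description precedes it below -/
import Mathlib

section
/- Fix an odd integer b ≥ 3 and for each integer i ≥ 1 define a_i = b^{-i} times the number of i-tuples (r_1,…,r_i) of integers with |r_k| ≤ (b-1)/2 for all k such that |r_k - r_{k+1}| ≥ (b+1)/2 for all 1 ≤ k ≤ i-1 (a_i is the probability that adding a column of i uniformly random balanced base-b digits produces i-1 consecutive carries). Then for odd i > 1, a_i = (8/b^{i+1}) · Σ_{r=1}^{(b-1)/2} λ_r^{(i-1)/2} · v_r², and for even i > 0, a_i = (8/b^{i+1}) · Σ_{r=1}^{(b-1)/2} λ_r^{(i-2)/2} · v_r · w_r, where λ_r = 1/(4·sin²((2r-1)π/(2b))), v_r = Σ_{j=1}^{(b-1)/2} sin((2r-1)jπ/b), and w_r = Σ_{j=1}^{(b-1)/2} j·sin((2r-1)jπ/b). -/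
open Real

/-- The number of `i`-tuples `(r_1, …, r_i)` of balanced base-`b` digits
(integers with `|r_k| ≤ (b-1)/2`) such that `|r_k - r_{k+1}| ≥ (b+1)/2` for all
`1 ≤ k ≤ i-1` (i.e. each consecutive pair produces a carry). -/
noncomputable def carryCount (b : ℤ) (i : ℕ) : ℕ :=
  (Finset.filter
    (fun r : Fin i → ℤ =>
      ∀ k l : Fin i, (l : ℕ) = (k : ℕ) + 1 → (b + 1) / 2 ≤ |r k - r l|)
    (Fintype.piFinset fun _ : Fin i => Finset.Icc (-((b - 1) / 2)) ((b - 1) / 2))).card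

/-- `λ_r = 1/(4 sin²((2r-1)π/(2b)))`. -/
noncomputable def lamEig (b : ℤ) (r : ℤ) : ℝ :=
  1 / (4 * Real.sin ((2 * (r : ℝ) - 1) * Real.pi / (2 * (b : ℝ))) ^ 2)

/-- `v_r = Σ_{j=1}^{(b-1)/2} sin((2r-1)jπ/b)`. -/
noncomputable def vSum (b : ℤ) (r : ℤ) : ℝ :=
  ∑ j ∈ Finset.Icc (1 : ℤ) ((b - 1) / 2),
    Real.sin ((2 * (r : ℝ) - 1) * (j : ℝ) * Real.pi / (b : ℝ))

/-- `w_r = Σ_{j=1}^{(b-1)/2} j sin((2r-1)jπ/b)`. -/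
noncomputable def wSum (b : ℤ) (r : ℤ) : ℝ :=
  ∑ j ∈ Finset.Icc (1 : ℤ) ((b - 1) / 2),
    (j : ℝ) * Real.sin ((2 * (r : ℝ) - 1) * (j : ℝ) * Real.pi / (b : ℝ))

namespace CarryAux

/-- Condition for a carry between digits `y` and `x`. -/
def cnd (m y x : ℤ) : Prop := m + 1 ≤ |y - x|

instance (m y x : ℤ) : Decidable (cnd m y x) := by unfold cnd; infer_instance

/-- Path condition for tuples. -/
def pc (m : ℤ) {i : ℕ} (r : Fin i → ℤ) : Prop :=
  ∀ k l : Fin i, (l : ℕ) = (k : ℕ) + 1 → m + 1 ≤ |r k - r l|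

instance (m : ℤ) (i : ℕ) (r : Fin i → ℤ) : Decidable (pc m r) := by
  unfold pc; infer_instance

/-- path counts starting at `y`, with `n` further steps. -/
noncomputable def fc (m : ℤ) : ℕ → ℤ → ℕ
  | 0, _ => 1
  | n+1, y => ∑ x ∈ (Finset.Icc (-m) m).filter (fun x => cnd m y x), fc m n x

lemma pc_tail {m : ℤ} {n : ℕ} {r : Fin (n + 2) → ℤ} (h : pc m r) : pc m (Fin.tail r) := by
  intro k l hkl
  have := h k.succ l.succ (by simp [Fin.val_succ, hkl])
  simpa [Fin.tail] using this

lemma one_eq_succ_zero {n : ℕ} : (1 : Fin (n + 2)) = Fin.succ 0 := by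
  apply Fin.ext; simp

lemma pc_cons {m : ℤ} {n : ℕ} {y : ℤ} {s : Fin (n + 1) → ℤ}
    (h1 : cnd m y (s 0)) (h2 : pc m s) : pc m (Fin.cons y s : Fin (n+2) → ℤ) := by
  intro k l hkl
  induction k using Fin.cases with
  | zero =>
    have hl : l = 1 := by apply Fin.ext; simpa using hkl
    subst hl
    rw [one_eq_succ_zero, Fin.cons_succ, Fin.cons_zero]
    exact h1
  | succ k' =>
    have hlne : l ≠ 0 := by
      intro h0; subst h0; simp at hkl
    obtain ⟨l', rfl⟩ := Fin.eq_succ_of_ne_zero hlne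
    rw [Fin.cons_succ, Fin.cons_succ]
    exact h2 k' l' (by simpa [Fin.val_succ] using hkl)

lemma card_base (m y : ℤ) :
    ((Fintype.piFinset fun _ : Fin 1 => Finset.Icc (-m) m).filter
      (fun r => r 0 = y ∧ pc m r)).card = if y ∈ Finset.Icc (-m) m then 1 else 0 := by
  have hpc : ∀ r : Fin 1 → ℤ, pc m r := by
    intro r k l hkl
    exact absurd hkl (by omega)
  split_ifs with hy
  · rw [Finset.card_eq_one]
    refine ⟨fun _ => y, ?_⟩
    ext r
    simp only [Finset.mem_filter, Fintype.mem_piFinset, Finset.mem_singleton]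
    constructor
    · rintro ⟨-, h0, -⟩
      funext i
      have : i = 0 := Subsingleton.elim i 0
      rw [this, h0]
    · rintro rfl
      exact ⟨fun _ => hy, rfl, hpc _⟩
  · rw [Finset.card_eq_zero]
    ext r
    simp only [Finset.mem_filter, Fintype.mem_piFinset, Finset.notMem_empty, iff_false]
    rintro ⟨hmem, h0, -⟩
    exact hy (h0 ▸ hmem 0)

lemma card_step (m y : ℤ) (n : ℕ) (hy : y ∈ Finset.Icc (-m) m) :
    ((Fintype.piFinset fun _ : Fin (n+2) => Finset.Icc (-m) m).filter
      (fun r => r 0 = y ∧ pc m r)).card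
    = ∑ x ∈ (Finset.Icc (-m) m).filter (fun x => cnd m y x),
        ((Fintype.piFinset fun _ : Fin (n+1) => Finset.Icc (-m) m).filter
          (fun s => s 0 = x ∧ pc m s)).card := by
  rw [← Finset.card_sigma]
  apply Finset.card_nbij' (fun r => ⟨r 1, Fin.tail r⟩)
    (fun p => Fin.cons y p.2)
  · rintro r hr
    simp only [Finset.mem_coe, Finset.mem_filter, Fintype.mem_piFinset] at hr
    obtain ⟨hmem, h0, hpc⟩ := hr
    simp only [Finset.mem_coe, Finset.mem_sigma, Finset.mem_filter, Fintype.mem_piFinset]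
    refine ⟨⟨hmem 1, ?_⟩, fun k => hmem _, ?_, pc_tail hpc⟩
    · have := hpc 0 1 (by simp)
      rw [h0] at this
      exact this
    · show r (Fin.succ 0) = r 1
      rw [← one_eq_succ_zero]
  · rintro ⟨x, s⟩ hp
    simp only [Finset.mem_coe, Finset.mem_sigma, Finset.mem_filter, Fintype.mem_piFinset] at hp
    obtain ⟨⟨hx, hcnd⟩, hmem, h0, hpc⟩ := hp
    simp only [Finset.mem_coe, Finset.mem_filter, Fintype.mem_piFinset]
    refine ⟨?_, Fin.cons_zero _ _, pc_cons (h0 ▸ hcnd) hpc⟩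
    intro k
    induction k using Fin.cases with
    | zero => simpa using hy
    | succ k' => rw [Fin.cons_succ]; exact hmem k'
  · rintro r hr
    simp only [Finset.mem_coe, Finset.mem_filter] at hr
    rw [← hr.2.1]
    exact Fin.cons_self_tail r
  · rintro ⟨x, s⟩ hp
    simp only [Finset.mem_coe, Finset.mem_sigma, Finset.mem_filter] at hp
    have h1 : (Fin.cons y s : Fin (n+2) → ℤ) 1 = s 0 := by
      rw [one_eq_succ_zero, Fin.cons_succ]
    refine Sigma.ext ?_ ?_
    · simp [h1, hp.2.2.1]
    · simp [Fin.tail_cons]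

lemma fc_eq_card (m : ℤ) (n : ℕ) (y : ℤ) (hy : y ∈ Finset.Icc (-m) m) :
    (fc m n y : ℕ) =
    ((Fintype.piFinset fun _ : Fin (n+1) => Finset.Icc (-m) m).filter
      (fun r => r 0 = y ∧ pc m r)).card := by
  induction n generalizing y with
  | zero => rw [card_base, if_pos hy]; rfl
  | succ n ih =>
    rw [card_step m y n hy]
    show ∑ x ∈ (Finset.Icc (-m) m).filter (fun x => cnd m y x), fc m n x = _
    apply Finset.sum_congr rfl
    intro x hx
    exact ih x (Finset.mem_filter.mp hx).1

lemma carry_eq_sum_fc (m : ℤ) (n : ℕ) :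
    ((Fintype.piFinset fun _ : Fin (n+1) => Finset.Icc (-m) m).filter (pc m)).card
    = ∑ y ∈ Finset.Icc (-m) m, fc m n y := by
  rw [Finset.card_eq_sum_card_fiberwise (f := fun r => r 0) (t := Finset.Icc (-m) m)
    (fun r hr => by
      simp only [Finset.mem_coe, Finset.mem_filter, Fintype.mem_piFinset] at hr
      exact hr.1 0)]
  apply Finset.sum_congr rfl
  intro y hy
  rw [fc_eq_card m n y hy, Finset.filter_filter]
  congr 1
  ext r
  simp [and_comm]


/-- telescoping sum over an integer interval -/
lemma telesc (g : ℤ → ℝ) (a : ℤ) (n : ℕ) :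
    ∑ k ∈ Finset.Icc a (a + n), (g k - g (k + 1)) = g a - g (a + n + 1) := by
  induction n with
  | zero => simp
  | succ n ih =>
    have h1 : a + (n + 1 : ℕ) = (a + n) + 1 := by push_cast; ring
    have h2 : Finset.Icc a ((a + n) + 1) = insert ((a + n) + 1) (Finset.Icc a (a + n)) := by
      ext x; simp only [Finset.mem_Icc, Finset.mem_insert]; omega
    rw [h1, h2, Finset.sum_insert (by simp [Finset.mem_Icc])]
    rw [ih]; ring

lemma telesc' (g : ℤ → ℝ) (a c : ℤ) (h : a - 1 ≤ c) :
    ∑ k ∈ Finset.Icc a c, (g k - g (k + 1)) = g a - g (c + 1) := by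
  rcases le_or_gt a c with hac | hac
  · obtain ⟨n, rfl⟩ : ∃ n : ℕ, c = a + n := ⟨(c - a).toNat, by omega⟩
    exact telesc g a n
  · have hc : c = a - 1 := by omega
    subst hc
    rw [Finset.Icc_eq_empty (by omega)]
    simp

lemma cos_half (r : ℤ) : Real.cos ((2 * (r : ℝ) - 1) * π / 2) = 0 := by
  have h1 : (2 * (r : ℝ) - 1) * π / 2 = (r : ℝ) * π - π / 2 := by ring
  rw [h1, Real.cos_sub, Real.cos_pi_div_two, Real.sin_pi_div_two, Real.sin_int_mul_pi]
  ring

lemma sin_half (r : ℤ) : Real.sin ((2 * (r : ℝ) - 1) * π / 2) = -Real.cos ((r : ℝ) * π) := by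
  have h1 : (2 * (r : ℝ) - 1) * π / 2 = (r : ℝ) * π - π / 2 := by ring
  rw [h1, Real.sin_sub, Real.cos_pi_div_two, Real.sin_pi_div_two, Real.sin_int_mul_pi]
  ring

lemma cos_int_sq (r : ℤ) : Real.cos ((r : ℝ) * π) ^ 2 = 1 := by
  have := Real.sin_sq_add_cos_sq ((r : ℝ) * π)
  rw [Real.sin_int_mul_pi] at this
  linarith [this]

lemma sin_ne (m d : ℤ) (hm : 0 ≤ m) (hd0 : d ≠ 0) (hd : |d| < 2 * m + 1) :
    Real.sin ((d : ℝ) * π / (2 * (m : ℝ) + 1)) ≠ 0 := by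
  intro h
  rw [Real.sin_eq_zero_iff] at h
  obtain ⟨n, hn⟩ := h
  have hb : (2 * (m : ℝ) + 1) ≠ 0 := by positivity
  have hpi := Real.pi_ne_zero
  have h2 : ((n * (2 * m + 1) : ℤ) : ℝ) * π = (d : ℝ) * π := by
    push_cast
    rw [mul_comm ((n:ℝ)) (2 * (m:ℝ) + 1), mul_assoc, hn]
    field_simp
  have hcast : n * (2 * m + 1) = d := by
    have := mul_right_cancel₀ hpi h2
    exact_mod_cast this
  rcases eq_or_ne n 0 with rfl | hn0
  · omega
  · have h1 : 1 ≤ |n| := Int.one_le_abs hn0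
    have h3 : |n * (2 * m + 1)| = |n| * (2 * m + 1) := by
      rw [abs_mul, abs_of_nonneg (by omega : (0:ℤ) ≤ 2 * m + 1)]
    have h4 : 2 * m + 1 ≤ |n| * (2 * m + 1) := le_mul_of_one_le_left (by omega) h1
    rw [hcast] at h3
    rw [← h3] at h4
    exact absurd hd (not_lt.mpr h4)

/-- `μ_r` : eigenvalue of the transfer matrix. -/
noncomputable def mu (m r : ℤ) : ℝ :=
  (-Real.cos ((r : ℝ) * π)) / (2 * Real.sin ((2 * (r : ℝ) - 1) * π / (2 * (2 * (m : ℝ) + 1))))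

lemma sin_theta_pos (m r : ℤ) (hm : 1 ≤ m) (hr : r ∈ Finset.Icc (1 : ℤ) m) :
    0 < Real.sin ((2 * (r : ℝ) - 1) * π / (2 * (2 * (m : ℝ) + 1))) := by
  rw [Finset.mem_Icc] at hr
  have hr1 : (1 : ℝ) ≤ (r : ℝ) := by exact_mod_cast hr.1
  have hrm : (r : ℝ) ≤ (m : ℝ) := by exact_mod_cast hr.2
  have hm1 : (1 : ℝ) ≤ (m : ℝ) := by exact_mod_cast hm
  apply Real.sin_pos_of_pos_of_lt_pi
  · apply div_pos (by nlinarith [Real.pi_pos]) (by nlinarith)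
  · rw [div_lt_iff₀ (by nlinarith)]
    nlinarith [Real.pi_pos]

/-- Eigenvector identity. -/
lemma eigen (m r j : ℤ) (hm : 1 ≤ m) (hr : r ∈ Finset.Icc (1 : ℤ) m)
    (hj1 : 1 ≤ j) (hj2 : j ≤ m) :
    ∑ k ∈ Finset.Icc (m + 1 - j) m,
      Real.sin ((2 * (r : ℝ) - 1) * (k : ℝ) * π / (2 * (m : ℝ) + 1))
    = mu m r * Real.sin ((2 * (r : ℝ) - 1) * (j : ℝ) * π / (2 * (m : ℝ) + 1)) := by
  set θ : ℝ := (2 * (r : ℝ) - 1) * π / (2 * (2 * (m : ℝ) + 1)) with hθ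
  have hs : 0 < Real.sin θ := sin_theta_pos m r hm hr
  have hb : (2 * (m : ℝ) + 1) ≠ 0 := by
    have : (1:ℝ) ≤ (m:ℝ) := by exact_mod_cast hm
    positivity
  set g : ℤ → ℝ := fun k => Real.cos ((2 * (k : ℝ) - 1) * θ) with hg
  have key : ∀ k : ℤ, Real.sin ((2 * (r : ℝ) - 1) * (k : ℝ) * π / (2 * (m : ℝ) + 1))
      = (g k - g (k + 1)) / (2 * Real.sin θ) := by
    intro k
    have hang : (2 * (r : ℝ) - 1) * (k : ℝ) * π / (2 * (m : ℝ) + 1) = 2 * (k : ℝ) * θ := by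
      rw [hθ]; field_simp
    have : g k - g (k + 1) = 2 * Real.sin (2 * (k : ℝ) * θ) * Real.sin θ := by
      rw [hg]
      push_cast
      rw [Real.cos_sub_cos]
      have e1 : ((2 * (k : ℝ) - 1) * θ + (2 * ((k : ℝ) + 1) - 1) * θ) / 2 = 2 * (k:ℝ) * θ := by ring
      have e2 : ((2 * (k : ℝ) - 1) * θ - (2 * ((k : ℝ) + 1) - 1) * θ) / 2 = -θ := by ring
      rw [e1, e2, Real.sin_neg]; ring
    rw [hang, this]
    field_simp
    try ring
  rw [Finset.sum_congr rfl (fun k _ => key k), ← Finset.sum_div]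
  rw [telesc' g (m + 1 - j) m (by omega)]
  have hg_top : g (m + 1) = 0 := by
    rw [hg]
    have : (2 * ((m : ℝ) + 1) - 1) * θ = (2 * (r : ℝ) - 1) * π / 2 := by
      rw [hθ]; field_simp; ring
    push_cast
    rw [this, cos_half]
  have hg_bot : g (m + 1 - j) =
      (-Real.cos ((r : ℝ) * π)) * Real.sin ((2 * (r : ℝ) - 1) * (j : ℝ) * π / (2 * (m : ℝ) + 1)) := by
    rw [hg]
    have : (2 * (((m : ℝ) + 1 - (j : ℝ))) - 1) * θ
        = (2 * (r : ℝ) - 1) * π / 2 - (2 * (r : ℝ) - 1) * (j : ℝ) * π / (2 * (m : ℝ) + 1) := by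
      rw [hθ]; field_simp; ring
    push_cast
    rw [this, Real.cos_sub, cos_half, sin_half]
    ring
  rw [hg_top, hg_bot, mu]
  rw [← hθ]
  ring



lemma cos_sum (m d : ℤ) (hm : 1 ≤ m) (hd : Real.sin ((d : ℝ) * π / (2 * (m : ℝ) + 1)) ≠ 0) :
    ∑ r ∈ Finset.Icc (1 : ℤ) m, Real.cos ((2 * (r : ℝ) - 1) * (d : ℝ) * π / (2 * (m : ℝ) + 1))
      = -Real.cos ((d : ℝ) * π) / 2 := by
  have hb : (2 * (m : ℝ) + 1) ≠ 0 := by positivity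
  set x : ℝ := (d : ℝ) * π / (2 * (m : ℝ) + 1) with hx
  set g : ℤ → ℝ := fun r => -Real.sin ((2 * (r : ℝ) - 2) * x) with hg
  have key : ∀ r : ℤ, Real.cos ((2 * (r : ℝ) - 1) * (d : ℝ) * π / (2 * (m : ℝ) + 1))
      = (g r - g (r + 1)) / (2 * Real.sin x) := by
    intro r
    have hang : (2 * (r : ℝ) - 1) * (d : ℝ) * π / (2 * (m : ℝ) + 1) = (2 * (r : ℝ) - 1) * x := by
      rw [hx]; ring
    have hdiff : g r - g (r + 1) = 2 * Real.sin x * Real.cos ((2 * (r : ℝ) - 1) * x) := by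
      rw [hg]
      push_cast
      have e0 : -Real.sin ((2 * (r : ℝ) - 2) * x) - -Real.sin ((2 * ((r : ℝ) + 1) - 2) * x)
          = Real.sin ((2 * (r : ℝ)) * x) - Real.sin ((2 * (r : ℝ) - 2) * x) := by ring_nf
      rw [e0, Real.sin_sub_sin]
      have e1 : ((2 * (r : ℝ)) * x - (2 * (r : ℝ) - 2) * x) / 2 = x := by ring
      have e2 : ((2 * (r : ℝ)) * x + (2 * (r : ℝ) - 2) * x) / 2 = (2 * (r : ℝ) - 1) * x := by ring
      rw [e1, e2]
    rw [hang, hdiff]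
    field_simp
    try ring
  rw [Finset.sum_congr rfl (fun r _ => key r), ← Finset.sum_div, telesc' g 1 m (by omega)]
  have hg1 : g 1 = 0 := by
    have : (2 * ((1:ℤ) : ℝ) - 2) * x = 0 := by push_cast; ring
    rw [hg]
    show -Real.sin ((2 * ((1:ℤ) : ℝ) - 2) * x) = 0
    rw [this, Real.sin_zero, neg_zero]
  have hgm : g (m + 1) = Real.cos ((d : ℝ) * π) * Real.sin x := by
    rw [hg]
    have hang2 : (2 * ((m : ℝ) + 1) - 2) * x = (d : ℝ) * π - x := by
      rw [hx]; field_simp; ring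
    push_cast
    rw [hang2, Real.sin_sub, Real.sin_int_mul_pi]
    ring
  rw [hg1, hgm]
  field_simp
  ring

lemma cos_two_int (d : ℤ) : Real.cos (((2 * d : ℤ) : ℝ) * π) = 1 := by
  have : ((2 * d : ℤ) : ℝ) * π = (d : ℝ) * (2 * π) := by push_cast; ring
  rw [this]
  exact_mod_cast Real.cos_int_mul_two_pi d

lemma orth (m j j' : ℤ) (hm : 1 ≤ m) (hj : j ∈ Finset.Icc (1 : ℤ) m)
    (hj' : j' ∈ Finset.Icc (1 : ℤ) m) :
    ∑ r ∈ Finset.Icc (1 : ℤ) m,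
        Real.sin ((2 * (r : ℝ) - 1) * (j : ℝ) * π / (2 * (m : ℝ) + 1)) *
          Real.sin ((2 * (r : ℝ) - 1) * (j' : ℝ) * π / (2 * (m : ℝ) + 1))
      = if j = j' then (2 * (m : ℝ) + 1) / 4 else 0 := by
  rw [Finset.mem_Icc] at hj hj'
  have key : ∀ r : ℤ,
      Real.sin ((2 * (r : ℝ) - 1) * (j : ℝ) * π / (2 * (m : ℝ) + 1)) *
        Real.sin ((2 * (r : ℝ) - 1) * (j' : ℝ) * π / (2 * (m : ℝ) + 1))
      = (Real.cos ((2 * (r : ℝ) - 1) * ((j - j' : ℤ) : ℝ) * π / (2 * (m : ℝ) + 1))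
          - Real.cos ((2 * (r : ℝ) - 1) * ((j + j' : ℤ) : ℝ) * π / (2 * (m : ℝ) + 1))) / 2 := by
    intro r
    set a := (2 * (r : ℝ) - 1) * (j : ℝ) * π / (2 * (m : ℝ) + 1) with ha
    set c := (2 * (r : ℝ) - 1) * (j' : ℝ) * π / (2 * (m : ℝ) + 1) with hc
    have e1 : (2 * (r : ℝ) - 1) * ((j - j' : ℤ) : ℝ) * π / (2 * (m : ℝ) + 1) = a - c := by
      rw [ha, hc]; push_cast; ring
    have e2 : (2 * (r : ℝ) - 1) * ((j + j' : ℤ) : ℝ) * π / (2 * (m : ℝ) + 1) = a + c := by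
      rw [ha, hc]; push_cast; ring
    rw [e1, e2, Real.cos_sub, Real.cos_add]
    ring
  rw [Finset.sum_congr rfl (fun r _ => key r), ← Finset.sum_div, Finset.sum_sub_distrib]
  have hsum2 : ∑ r ∈ Finset.Icc (1 : ℤ) m,
      Real.cos ((2 * (r : ℝ) - 1) * ((j + j' : ℤ) : ℝ) * π / (2 * (m : ℝ) + 1))
      = -Real.cos (((j + j' : ℤ) : ℝ) * π) / 2 :=
    cos_sum m (j + j') hm (sin_ne m (j + j') (by omega) (by omega) (by rw [abs_lt]; omega))
  by_cases hjj : j = j'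
  · subst hjj
    rw [if_pos rfl, hsum2]
    have hz : ∀ r ∈ Finset.Icc (1 : ℤ) m,
        Real.cos ((2 * (r : ℝ) - 1) * ((j - j : ℤ) : ℝ) * π / (2 * (m : ℝ) + 1)) = 1 := by
      intro r _
      simp
    rw [Finset.sum_congr rfl hz, Finset.sum_const]
    have hcos : Real.cos (((j + j : ℤ) : ℝ) * π) = 1 := by
      have : ((j + j : ℤ) : ℝ) = ((2 * j : ℤ) : ℝ) := by push_cast; ring
      rw [this]; exact cos_two_int j
    rw [hcos]
    have hcard : (Finset.Icc (1 : ℤ) m).card = m.toNat := by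
      rw [Int.card_Icc]; omega
    rw [hcard]
    have : ((m.toNat : ℕ) : ℝ) = (m : ℝ) := by
      rw [← Int.cast_natCast]; congr 1; omega
    rw [nsmul_eq_mul, this]
    ring
  · rw [if_neg hjj, hsum2]
    have hsum1 : ∑ r ∈ Finset.Icc (1 : ℤ) m,
        Real.cos ((2 * (r : ℝ) - 1) * ((j - j' : ℤ) : ℝ) * π / (2 * (m : ℝ) + 1))
        = -Real.cos (((j - j' : ℤ) : ℝ) * π) / 2 :=
      cos_sum m (j - j') hm (sin_ne m (j - j') (by omega) (by omega) (by
        rw [abs_lt]; omega))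
    rw [hsum1]
    have hper : Real.cos (((j + j' : ℤ) : ℝ) * π) = Real.cos (((j - j' : ℤ) : ℝ) * π) := by
      have : ((j + j' : ℤ) : ℝ) * π = ((j - j' : ℤ) : ℝ) * π + (j' : ℝ) * (2 * π) := by
        push_cast; ring
      rw [this]
      exact_mod_cast Real.cos_add_int_mul_two_pi _ j'
    rw [hper]
    ring

/-- `v_r` in terms of `m`. -/
noncomputable def vS (m r : ℤ) : ℝ :=
  ∑ j ∈ Finset.Icc (1 : ℤ) m,
    Real.sin ((2 * (r : ℝ) - 1) * (j : ℝ) * π / (2 * (m : ℝ) + 1))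

lemma inv_sum (m j : ℤ) (hm : 1 ≤ m) (hj : j ∈ Finset.Icc (1 : ℤ) m) :
    ∑ r ∈ Finset.Icc (1 : ℤ) m,
        vS m r * Real.sin ((2 * (r : ℝ) - 1) * (j : ℝ) * π / (2 * (m : ℝ) + 1))
      = (2 * (m : ℝ) + 1) / 4 := by
  unfold vS
  rw [Finset.sum_congr rfl (fun r _ => Finset.sum_mul _ _ _)]
  rw [Finset.sum_comm]
  have : ∀ j' ∈ Finset.Icc (1 : ℤ) m,
      ∑ r ∈ Finset.Icc (1 : ℤ) m,
        Real.sin ((2 * (r : ℝ) - 1) * (j' : ℝ) * π / (2 * (m : ℝ) + 1)) *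
          Real.sin ((2 * (r : ℝ) - 1) * (j : ℝ) * π / (2 * (m : ℝ) + 1))
      = if j' = j then (2 * (m : ℝ) + 1) / 4 else 0 := fun j' hj' => orth m j' j hm hj' hj
  rw [Finset.sum_congr rfl this, Finset.sum_ite_eq' (Finset.Icc (1:ℤ) m) j
    (fun _ => (2 * (m : ℝ) + 1) / 4), if_pos hj]

lemma fc_neg (m : ℤ) (n : ℕ) : ∀ y : ℤ, fc m n (-y) = fc m n y := by
  induction n with
  | zero => intro y; rfl
  | succ n ih =>
    intro y
    show ∑ x ∈ (Finset.Icc (-m) m).filter (fun x => cnd m (-y) x), fc m n x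
        = ∑ x ∈ (Finset.Icc (-m) m).filter (fun x => cnd m y x), fc m n x
    refine Finset.sum_nbij' (fun x => -x) (fun x => -x) ?_ ?_ ?_ ?_ ?_
    · intro a ha
      rw [Finset.mem_filter] at ha ⊢
      simp only [Finset.mem_filter, Finset.mem_Icc, cnd] at ha ⊢
      constructor
      · omega
      · rw [show y - -a = -(-y - a) by ring, abs_neg]; exact ha.2
    · intro a ha
      rw [Finset.mem_filter] at ha ⊢
      simp only [Finset.mem_filter, Finset.mem_Icc, cnd] at ha ⊢
      constructor
      · omega
      · rw [show -y - -a = -(y - a) by ring, abs_neg]; exact ha.2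
    · intro a _; ring
    · intro a _; ring
    · intro a _; rw [ih]

lemma fc_succ_pos (m : ℤ) (n : ℕ) (j : ℤ) (hj1 : 1 ≤ j) (hj2 : j ≤ m) :
    fc m (n+1) j = ∑ k ∈ Finset.Icc (m + 1 - j) m, fc m n k := by
  show ∑ x ∈ (Finset.Icc (-m) m).filter (fun x => cnd m j x), fc m n x = _
  have hset : (Finset.Icc (-m) m).filter (fun x => cnd m j x) = Finset.Icc (-m) (j - m - 1) := by
    ext x
    simp only [Finset.mem_filter, Finset.mem_Icc, cnd, le_abs]
    omega
  rw [hset]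
  refine Finset.sum_nbij' (fun x => -x) (fun x => -x) ?_ ?_ ?_ ?_ ?_
  · intro a ha; simp only [Finset.mem_Icc] at ha ⊢; omega
  · intro a ha; simp only [Finset.mem_Icc] at ha ⊢; omega
  · intro a _; ring
  · intro a _; ring
  · intro a _; rw [← fc_neg m n a]

lemma fc_zero (m : ℤ) (hm : 1 ≤ m) (n : ℕ) : fc m (n+1) 0 = 0 := by
  show ∑ x ∈ (Finset.Icc (-m) m).filter (fun x => cnd m 0 x), fc m n x = 0
  have : (Finset.Icc (-m) m).filter (fun x => cnd m 0 x) = ∅ := by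
    rw [Finset.filter_eq_empty_iff]
    intro x hx
    simp only [Finset.mem_Icc] at hx
    simp only [cnd, le_abs]
    omega
  rw [this, Finset.sum_empty]


/-- Spectral representation of path counts. -/
noncomputable def Uc (m : ℤ) (n : ℕ) (j : ℤ) : ℝ :=
  ∑ r ∈ Finset.Icc (1 : ℤ) m,
    (4 * vS m r / (2 * (m : ℝ) + 1)) * (mu m r) ^ n *
      Real.sin ((2 * (r : ℝ) - 1) * (j : ℝ) * π / (2 * (m : ℝ) + 1))

lemma fc_spec (m : ℤ) (hm : 1 ≤ m) (n : ℕ) :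
    ∀ j : ℤ, 1 ≤ j → j ≤ m → (fc m n j : ℝ) = Uc m n j := by
  have hb : (2 * (m : ℝ) + 1) ≠ 0 := by
    have : (1:ℝ) ≤ (m:ℝ) := by exact_mod_cast hm
    positivity
  induction n with
  | zero =>
    intro j hj1 hj2
    show ((1 : ℕ) : ℝ) = Uc m 0 j
    unfold Uc
    have : ∀ r ∈ Finset.Icc (1:ℤ) m,
        (4 * vS m r / (2 * (m : ℝ) + 1)) * (mu m r) ^ 0 *
          Real.sin ((2 * (r : ℝ) - 1) * (j : ℝ) * π / (2 * (m : ℝ) + 1))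
        = (4 / (2 * (m : ℝ) + 1)) *
          (vS m r * Real.sin ((2 * (r : ℝ) - 1) * (j : ℝ) * π / (2 * (m : ℝ) + 1))) := by
      intro r _
      rw [pow_zero]; ring
    rw [Finset.sum_congr rfl this, ← Finset.mul_sum,
      inv_sum m j hm (Finset.mem_Icc.mpr ⟨hj1, hj2⟩)]
    field_simp
    norm_num
  | succ n ih =>
    intro j hj1 hj2
    rw [fc_succ_pos m n j hj1 hj2]
    push_cast
    have h1 : ∀ k ∈ Finset.Icc (m + 1 - j) m, ((fc m n k : ℕ) : ℝ) = Uc m n k := by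
      intro k hk
      rw [Finset.mem_Icc] at hk
      exact ih k (by omega) hk.2
    rw [Finset.sum_congr rfl h1]
    unfold Uc
    rw [Finset.sum_comm]
    apply Finset.sum_congr rfl
    intro r hr
    rw [← Finset.mul_sum, eigen m r j hm hr hj1 hj2, pow_succ]
    ring

/-- Total path count over all starting digits. -/
lemma total (m : ℤ) (hm : 1 ≤ m) (n : ℕ) :
    ((∑ y ∈ Finset.Icc (-m) m, fc m (n+1) y : ℕ) : ℝ)
      = ∑ r ∈ Finset.Icc (1 : ℤ) m,
          (8 * vS m r ^ 2 / (2 * (m : ℝ) + 1)) * (mu m r) ^ (n + 1) := by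
  have hsplit : Finset.Icc (-m) m = (Finset.Icc (-m) (-1)) ∪ (Finset.Icc (0:ℤ) m) := by
    ext x; simp only [Finset.mem_Icc, Finset.mem_union]; omega
  have hdisj : Disjoint (Finset.Icc (-m) (-1)) (Finset.Icc (0:ℤ) m) := by
    rw [Finset.disjoint_left]
    intro a ha ha'
    simp only [Finset.mem_Icc] at ha ha'
    omega
  have h0 : Finset.Icc (0:ℤ) m = insert 0 (Finset.Icc (1:ℤ) m) := by
    ext x; simp only [Finset.mem_Icc, Finset.mem_insert]; omega
  have hneg : ∑ y ∈ Finset.Icc (-m) (-1), fc m (n+1) y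
      = ∑ j ∈ Finset.Icc (1:ℤ) m, fc m (n+1) j := by
    refine Finset.sum_nbij' (fun x => -x) (fun x => -x) ?_ ?_ ?_ ?_ ?_
    · intro a ha; simp only [Finset.mem_Icc] at ha ⊢; omega
    · intro a ha; simp only [Finset.mem_Icc] at ha ⊢; omega
    · intro a _; ring
    · intro a _; ring
    · intro a _; rw [← fc_neg m (n+1) (-a), neg_neg]
  rw [hsplit, Finset.sum_union hdisj, h0,
    Finset.sum_insert (by simp), fc_zero m hm n, hneg]
  push_cast
  have h2 : ∀ j ∈ Finset.Icc (1:ℤ) m, ((fc m (n+1) j : ℕ) : ℝ) = Uc m (n+1) j := by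
    intro j hj
    rw [Finset.mem_Icc] at hj
    exact fc_spec m hm (n+1) j hj.1 hj.2
  rw [Finset.sum_congr rfl h2]
  unfold Uc
  rw [Finset.sum_comm]
  have h3 : ∀ r ∈ Finset.Icc (1:ℤ) m,
      ∑ j ∈ Finset.Icc (1:ℤ) m,
        (4 * vS m r / (2 * (m : ℝ) + 1)) * (mu m r) ^ (n+1) *
          Real.sin ((2 * (r : ℝ) - 1) * (j : ℝ) * π / (2 * (m : ℝ) + 1))
      = (4 * vS m r ^ 2 / (2 * (m : ℝ) + 1)) * (mu m r) ^ (n+1) := by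
    intro r _
    rw [← Finset.mul_sum]
    show _ * vS m r = _
    ring
  rw [Finset.sum_congr rfl h3, zero_add, ← Finset.sum_add_distrib]
  apply Finset.sum_congr rfl
  intro r _
  ring

/-- The `w = μ v` identity. -/
lemma w_eq (m r : ℤ) (hm : 1 ≤ m) (hr : r ∈ Finset.Icc (1:ℤ) m) :
    ∑ j ∈ Finset.Icc (1:ℤ) m,
        (j : ℝ) * Real.sin ((2 * (r : ℝ) - 1) * (j : ℝ) * π / (2 * (m : ℝ) + 1))
      = mu m r * vS m r := by
  have h1 : mu m r * vS m r
      = ∑ j ∈ Finset.Icc (1:ℤ) m, ∑ k ∈ Finset.Icc (m + 1 - j) m,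
          Real.sin ((2 * (r : ℝ) - 1) * (k : ℝ) * π / (2 * (m : ℝ) + 1)) := by
    unfold vS
    rw [Finset.mul_sum]
    apply Finset.sum_congr rfl
    intro j hj
    rw [Finset.mem_Icc] at hj
    rw [eigen m r j hm hr hj.1 hj.2]
  rw [h1]
  have h2 : ∀ j ∈ Finset.Icc (1:ℤ) m,
      ∑ k ∈ Finset.Icc (m + 1 - j) m,
          Real.sin ((2 * (r : ℝ) - 1) * (k : ℝ) * π / (2 * (m : ℝ) + 1))
      = ∑ k ∈ Finset.Icc (1:ℤ) m,
          (if m + 1 - j ≤ k then Real.sin ((2 * (r : ℝ) - 1) * (k : ℝ) * π / (2 * (m : ℝ) + 1)) else 0) := by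
    intro j hj
    rw [Finset.mem_Icc] at hj
    rw [← Finset.sum_filter]
    apply Finset.sum_congr ?_ (fun _ _ => rfl)
    ext k
    simp only [Finset.mem_Icc, Finset.mem_filter]
    omega
  rw [Finset.sum_congr rfl h2, Finset.sum_comm]
  apply Finset.sum_congr rfl
  intro k hk
  rw [Finset.mem_Icc] at hk
  have h3 : ∑ j ∈ Finset.Icc (1:ℤ) m,
      (if m + 1 - j ≤ k then Real.sin ((2 * (r : ℝ) - 1) * (k : ℝ) * π / (2 * (m : ℝ) + 1)) else 0)
      = ∑ j ∈ (Finset.Icc (1:ℤ) m).filter (fun j => m + 1 - j ≤ k),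
          Real.sin ((2 * (r : ℝ) - 1) * (k : ℝ) * π / (2 * (m : ℝ) + 1)) := by
    rw [Finset.sum_filter]
  rw [h3]
  have h4 : (Finset.Icc (1:ℤ) m).filter (fun j => m + 1 - j ≤ k) = Finset.Icc (m + 1 - k) m := by
    ext j
    simp only [Finset.mem_Icc, Finset.mem_filter]
    omega
  rw [h4, Finset.sum_const, Int.card_Icc]
  have h5 : (((m + 1 - (m + 1 - k)).toNat : ℕ) : ℝ) = (k : ℝ) := by
    have : ((m + 1 - (m + 1 - k)).toNat : ℤ) = k := by omega
    exact_mod_cast this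
  rw [nsmul_eq_mul, h5]

lemma mu_sq (m r : ℤ) :
    (mu m r) ^ 2 = 1 / (4 * Real.sin ((2 * (r : ℝ) - 1) * π / (2 * (2 * (m : ℝ) + 1))) ^ 2) := by
  rw [mu, div_pow, show (-Real.cos ((r:ℝ) * π)) ^ 2 = Real.cos ((r:ℝ) * π) ^ 2 from by ring,
    cos_int_sq]
  congr 1
  ring

end CarryAux
namespace CarryAux

lemma carry_eq (m : ℤ) (i : ℕ) :
    carryCount (2 * m + 1) i
      = ((Fintype.piFinset fun _ : Fin i => Finset.Icc (-m) m).filter (pc m)).card := by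
  unfold carryCount pc
  have h1 : (2 * m + 1 - 1) / 2 = m := by omega
  have h2 : (2 * m + 1 + 1) / 2 = m + 1 := by omega
  simp only [h1, h2]

lemma cast_b (m : ℤ) : ((2 * m + 1 : ℤ) : ℝ) = 2 * (m : ℝ) + 1 := by push_cast; ring

lemma vSum_eq (m r : ℤ) : vSum (2 * m + 1) r = vS m r := by
  unfold vSum vS
  rw [show (2 * m + 1 - 1) / 2 = m from by omega]
  apply Finset.sum_congr rfl
  intro j _
  rw [cast_b]

lemma wSum_eq (m r : ℤ) (hm : 1 ≤ m) (hr : r ∈ Finset.Icc (1:ℤ) m) :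
    wSum (2 * m + 1) r = mu m r * vS m r := by
  unfold wSum
  rw [show (2 * m + 1 - 1) / 2 = m from by omega, ← w_eq m r hm hr]
  apply Finset.sum_congr rfl
  intro j _
  rw [cast_b]

lemma lamEig_eq (m r : ℤ) : lamEig (2 * m + 1) r = (mu m r) ^ 2 := by
  unfold lamEig
  rw [mu_sq, cast_b]

/-- Master formula. -/
lemma master (m : ℤ) (hm : 1 ≤ m) (n : ℕ) :
    (carryCount (2 * m + 1) (n + 2) : ℝ)
      = ∑ r ∈ Finset.Icc (1 : ℤ) m,
          (8 * vS m r ^ 2 / (2 * (m : ℝ) + 1)) * (mu m r) ^ (n + 1) := by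
  rw [carry_eq, carry_eq_sum_fc m (n+1)]
  exact total m hm n

end CarryAux

theorem stmt14 (b : ℤ) (hodd : Odd b) (hb : 3 ≤ b) (i : ℕ) :
    (Odd i → 1 < i →
      (carryCount b i : ℝ) / (b : ℝ) ^ i
        = (8 / (b : ℝ) ^ (i + 1)) *
            ∑ r ∈ Finset.Icc (1 : ℤ) ((b - 1) / 2),
              lamEig b r ^ ((i - 1) / 2) * vSum b r ^ 2) ∧
    (Even i → 0 < i →
      (carryCount b i : ℝ) / (b : ℝ) ^ i
        = (8 / (b : ℝ) ^ (i + 1)) *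
            ∑ r ∈ Finset.Icc (1 : ℤ) ((b - 1) / 2),
              lamEig b r ^ ((i - 2) / 2) * vSum b r * wSum b r) := by
  obtain ⟨m, hm⟩ := hodd
  subst hm
  have hm1 : 1 ≤ m := by omega
  have hB : (2 * (m : ℝ) + 1) ≠ 0 := by
    have : (1:ℝ) ≤ (m:ℝ) := by exact_mod_cast hm1
    positivity
  have hBc := CarryAux.cast_b m
  have hIcc : (2 * m + 1 - 1) / 2 = m := by omega
  constructor
  · intro hoi hi1
    obtain ⟨n, rfl⟩ : ∃ n, i = n + 2 := ⟨i - 2, by omega⟩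
    have hparity : n + 1 = 2 * ((n + 2 - 1) / 2) := by
      rcases hoi with ⟨t, ht⟩; omega
    rw [CarryAux.master m hm1 n, hIcc]
    rw [Finset.sum_div, Finset.mul_sum]
    apply Finset.sum_congr rfl
    intro r hr
    rw [CarryAux.lamEig_eq, CarryAux.vSum_eq, hBc]
    have hmu : CarryAux.mu m r ^ (n + 1)
        = (CarryAux.mu m r ^ 2) ^ ((n + 2 - 1) / 2) := by
      rw [hparity, pow_mul]
    rw [hmu]
    field_simp
    try ring
  · intro hei hi1
    obtain ⟨n, rfl⟩ : ∃ n, i = n + 2 := by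
      refine ⟨i - 2, ?_⟩
      have h2 := Nat.even_iff.mp hei
      omega
    have hparity : n = 2 * ((n + 2 - 2) / 2) := by
      rcases hei with ⟨t, ht⟩; omega
    rw [CarryAux.master m hm1 n, hIcc]
    rw [Finset.sum_div, Finset.mul_sum]
    apply Finset.sum_congr rfl
    intro r hr
    rw [CarryAux.lamEig_eq, CarryAux.vSum_eq, CarryAux.wSum_eq m r hm1 hr, hBc]
    have hmu : CarryAux.mu m r ^ (n + 1)
        = (CarryAux.mu m r ^ 2) ^ ((n + 2 - 2) / 2) * CarryAux.mu m r := by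
      rw [show n + 1 = 2 * ((n + 2 - 2) / 2) + 1 from by omega, pow_succ, pow_mul]
    rw [hmu]
    field_simp
    try ring
end

section
/- Let b ≥ 3 be an odd integer and set m = (b-1)/2. Let M be the m×m real matrix with (j,k) entry min(j,k) for 1 ≤ j,k ≤ m. Then for each 1 ≤ r ≤ m, the vector ψ_r with entries ψ_r(k) = sin((2r-1)kπ/b) is an eigenvector of M with eigenvalue λ_r = 1/(4·sin²((2r-1)π/(2b))); that is, for all 1 ≤ j ≤ m, Σ_{k=1}^{m} min(j,k)·sin((2r-1)kπ/b) = λ_r · sin((2r-1)jπ/b). -/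
private lemma tel15 (f : ℤ → ℝ) (a b : ℤ) (h : a - 1 ≤ b) :
    ∑ k ∈ Finset.Icc a b, (f k - f (k + 1)) = f a - f (b + 1) := by
  refine Int.le_induction (motive := fun c _ => ∑ k ∈ Finset.Icc a c, (f k - f (k + 1)) = f a - f (c + 1)) ?_ ?_ b h
  · show ∑ k ∈ Finset.Icc a (a - 1), (f k - f (k + 1)) = f a - f (a - 1 + 1)
    rw [Finset.Icc_eq_empty (by omega), show a - 1 + 1 = a by ring]
    simp
  · intro n hn ih
    show ∑ k ∈ Finset.Icc a (n + 1), (f k - f (k + 1)) = f a - f (n + 1 + 1)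
    have hins : Finset.Icc a (n + 1) = insert (n + 1) (Finset.Icc a n) := by
      ext x; simp [Finset.mem_Icc]; omega
    rw [hins, Finset.sum_insert (by simp), ih]
    ring

theorem stmt15 (b : ℤ) (hodd : Odd b) (hb : 3 ≤ b) (r j : ℤ)
    (hr1 : 1 ≤ r) (hr2 : r ≤ (b - 1) / 2) (hj1 : 1 ≤ j) (hj2 : j ≤ (b - 1) / 2) :
    ∑ k ∈ Finset.Icc (1 : ℤ) ((b - 1) / 2),
        ((min j k : ℤ) : ℝ) * Real.sin ((2 * (r : ℝ) - 1) * (k : ℝ) * Real.pi / (b : ℝ))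
      = (1 / (4 * Real.sin ((2 * (r : ℝ) - 1) * Real.pi / (2 * (b : ℝ))) ^ 2)) *
          Real.sin ((2 * (r : ℝ) - 1) * (j : ℝ) * Real.pi / (b : ℝ)) := by
  obtain ⟨t, ht⟩ := hodd
  have hm : (b - 1) / 2 = t := by omega
  rw [hm] at hr2 hj2 ⊢
  have hb0 : (0:ℝ) < (b:ℝ) := by exact_mod_cast (by omega : (0:ℤ) < b)
  have hr1' : (1:ℝ) ≤ (r:ℝ) := by exact_mod_cast hr1
  have hrb : (2 * (r:ℝ) - 1) < 2 * (b:ℝ) := by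
    have : 2 * r - 1 < 2 * b := by omega
    exact_mod_cast this
  set y : ℝ := (2 * (r : ℝ) - 1) * Real.pi / (2 * (b : ℝ)) with hy
  set s : ℝ := Real.sin y with hs
  have hy0 : 0 < y := by
    apply div_pos (by nlinarith [Real.pi_pos]) (by linarith)
  have hyπ : y < Real.pi := by
    rw [hy, div_lt_iff₀ (by linarith)]
    nlinarith [Real.pi_pos]
  have hs0 : 0 < s := Real.sin_pos_of_pos_of_lt_pi hy0 hyπ
  have hs2 : (2 * s) ≠ 0 := by positivity
  -- f i = cos((i - 1/2) * 2y), h i = sin((i-1) * 2y)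
  set f : ℤ → ℝ := fun k => Real.cos (((k:ℝ) - 1/2) * (2*y)) with hf
  set g : ℤ → ℝ := fun i => Real.sin (((i:ℝ) - 1) * (2*y)) with hg
  have key1 : ∀ k : ℤ, Real.sin ((k:ℝ) * (2*y)) * (2*s) = f k - f (k+1) := by
    intro k
    rw [hf]
    simp only []
    rw [show (((k:ℤ):ℝ) - 1/2) * (2*y) = (k:ℝ)*(2*y) - y by push_cast; ring,
        show (((k+1:ℤ):ℝ) - 1/2) * (2*y) = (k:ℝ)*(2*y) + y by push_cast; ring,
        Real.cos_sub, Real.cos_add, hs]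
    ring
  have key2 : ∀ i : ℤ, f i * (2*s) = -(g i - g (i+1)) := by
    intro i
    rw [hf, hg]
    simp only []
    rw [show (((i:ℤ):ℝ) - 1) * (2*y) = ((i:ℝ) - 1/2)*(2*y) - y by push_cast; ring,
        show (((i+1:ℤ):ℝ) - 1) * (2*y) = ((i:ℝ) - 1/2)*(2*y) + y by push_cast; ring,
        Real.sin_sub, Real.sin_add, hs]
    ring
  have hf0 : f (t + 1) = 0 := by
    rw [hf]
    simp only []
    have harg : (((t+1:ℤ):ℝ) - 1/2) * (2*y) = (2 * ((r:ℝ) - 1) + 1) * Real.pi / 2 := by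
      rw [hy]
      have hb' : ((b:ℝ)) = 2*(t:ℝ)+1 := by exact_mod_cast ht
      push_cast
      field_simp
      rw [hb']
      ring
    rw [harg, Real.cos_eq_zero_iff]
    exact ⟨r - 1, by push_cast; ring⟩
  have sum1 : ∀ i : ℤ, 1 ≤ i → i ≤ t →
      ∑ k ∈ Finset.Icc i t, Real.sin ((k:ℝ) * (2*y)) = f i / (2*s) := by
    intro i h1 h2
    rw [eq_div_iff hs2, Finset.sum_mul,
        Finset.sum_congr rfl (fun k _ => key1 k), tel15 f i t (by omega), hf0]
    ring
  have sum2 : ∑ i ∈ Finset.Icc (1:ℤ) j, f i = Real.sin ((j:ℝ) * (2*y)) / (2*s) := by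
    rw [eq_div_iff hs2, Finset.sum_mul,
        Finset.sum_congr rfl (fun i _ => key2 i), Finset.sum_neg_distrib,
        tel15 g 1 j (by omega)]
    rw [hg]
    simp only []
    rw [show ((1:ℤ):ℝ) - 1 = 0 by norm_num,
        show (((j+1:ℤ):ℝ) - 1) * (2*y) = (j:ℝ)*(2*y) by push_cast; ring]
    simp
  have harg : ∀ x : ℤ, (2 * (r:ℝ) - 1) * (x:ℝ) * Real.pi / (b:ℝ) = (x:ℝ) * (2*y) := by
    intro x
    rw [hy]
    field_simp
  rw [Finset.sum_congr rfl (fun k _ => by rw [harg k]), harg j]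
  have expand : ∀ k ∈ Finset.Icc (1:ℤ) t, ((min j k : ℤ):ℝ) * Real.sin ((k:ℝ) * (2*y))
      = ∑ i ∈ Finset.Icc (1:ℤ) j, (if i ≤ k then Real.sin ((k:ℝ) * (2*y)) else 0) := by
    intro k hk
    rw [Finset.mem_Icc] at hk
    rw [← Finset.sum_filter, Finset.sum_const, nsmul_eq_mul]
    have hfil : (Finset.Icc (1:ℤ) j).filter (fun i => i ≤ k) = Finset.Icc 1 (min j k) := by
      ext x; simp [Finset.mem_Icc, Finset.mem_filter]; omega
    rw [hfil, Int.card_Icc, show min j k + 1 - 1 = min j k from by ring]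
    have hc : (((min j k).toNat : ℕ) : ℝ) = ((min j k : ℤ) : ℝ) := by
      rw [← Int.toNat_of_nonneg (show (0:ℤ) ≤ min j k by omega)]
      norm_cast
    rw [hc]
  rw [Finset.sum_congr rfl expand, Finset.sum_comm]
  have inner : ∀ i ∈ Finset.Icc (1:ℤ) j,
      ∑ k ∈ Finset.Icc (1:ℤ) t, (if i ≤ k then Real.sin ((k:ℝ) * (2*y)) else 0)
        = f i / (2*s) := by
    intro i hi
    rw [Finset.mem_Icc] at hi
    rw [← Finset.sum_filter]
    have hfil : (Finset.Icc (1:ℤ) t).filter (fun k => i ≤ k) = Finset.Icc i t := by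
      ext x; simp [Finset.mem_Icc, Finset.mem_filter]; omega
    rw [hfil]
    exact sum1 i hi.1 (le_trans hi.2 hj2)
  rw [Finset.sum_congr rfl inner, ← Finset.sum_div, sum2, div_div,
      show (2*s)*(2*s) = 4*s^2 from by ring]
  ring
end

section
/- For every integer i ≥ 2, the number of i-tuples (r_1,…,r_i) of integers with r_k ∈ {-2,-1,0,1,2} for all k such that |r_k - r_{k+1}| ≥ 3 for all 1 ≤ k ≤ i-1 equals 2·F_{i+2}, where F_k denotes the k-th Fibonacci number with F_1 = F_2 = 1. Consequently, the probability a_i that adding a column of i uniformly random balanced base-5 digits produces i-1 consecutive carries equals 2·F_{i+2}/5^i. -/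
set_option maxHeartbeats 1000000

namespace Stmt19Aux

noncomputable def V (i : ℕ) : Finset (Fin i → ℤ) :=
  (Fintype.piFinset fun _ : Fin i => Finset.Icc (-2 : ℤ) 2).filter
    (fun r => ∀ k l : Fin i, (l : ℕ) = (k : ℕ) + 1 → 3 ≤ |r k - r l|)

lemma carryCount_eq (i : ℕ) : carryCount 5 i = (V i).card := by
  unfold carryCount V
  norm_num

noncomputable def W (i : ℕ) (a : ℤ) : Finset (Fin (i + 1) → ℤ) :=
  (V (i + 1)).filter (fun r => r (Fin.last i) = a)

noncomputable def f (i : ℕ) (a : ℤ) : ℕ := (W i a).card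

lemma cond_iff {n : ℕ} (r : Fin n → ℤ) :
    (∀ k l : Fin n, (l : ℕ) = (k : ℕ) + 1 → 3 ≤ |r k - r l|) ↔
    ∀ k : ℕ, (h : k + 1 < n) → 3 ≤ |r ⟨k, by omega⟩ - r ⟨k + 1, h⟩| := by
  constructor
  · intro H k h
    exact H ⟨k, by omega⟩ ⟨k + 1, h⟩ rfl
  · rintro H ⟨k, hk⟩ ⟨l, hl⟩ hkl
    simp only at hkl
    subst hkl
    exact H k hl

lemma mem_V_iff {n : ℕ} (r : Fin n → ℤ) :
    r ∈ V n ↔ (∀ k, r k ∈ Finset.Icc (-2 : ℤ) 2) ∧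
      ∀ k : ℕ, (h : k + 1 < n) → 3 ≤ |r ⟨k, by omega⟩ - r ⟨k + 1, h⟩| := by
  rw [V, Finset.mem_filter, Fintype.mem_piFinset, cond_iff]

lemma mem_snoc_iff {i : ℕ} (q : Fin (i + 1) → ℤ) (a : ℤ) :
    Fin.snoc q a ∈ V (i + 2) ↔
      q ∈ V (i + 1) ∧ a ∈ Finset.Icc (-2 : ℤ) 2 ∧ 3 ≤ |q (Fin.last i) - a| := by
  rw [mem_V_iff, mem_V_iff]
  constructor
  · rintro ⟨h1, h2⟩
    refine ⟨⟨?_, ?_⟩, ?_, ?_⟩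
    · intro k
      have := h1 (Fin.castSucc k)
      rwa [Fin.snoc_castSucc] at this
    · intro k h
      have := h2 k (by omega)
      have e1 : (⟨k, by omega⟩ : Fin (i + 2)) = Fin.castSucc ⟨k, by omega⟩ := rfl
      have e2 : (⟨k + 1, by omega⟩ : Fin (i + 2)) = Fin.castSucc ⟨k + 1, by omega⟩ := rfl
      rwa [e1, e2, Fin.snoc_castSucc, Fin.snoc_castSucc] at this
    · have := h1 (Fin.last (i + 1))
      rwa [Fin.snoc_last] at this
    · have := h2 i (by omega)
      have e1 : (⟨i, by omega⟩ : Fin (i + 2)) = Fin.castSucc (Fin.last i) := rfl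
      have e2 : (⟨i + 1, by omega⟩ : Fin (i + 2)) = Fin.last (i + 1) := rfl
      rwa [e1, e2, Fin.snoc_castSucc, Fin.snoc_last] at this
  · rintro ⟨⟨h1, h2⟩, ha, hlast⟩
    constructor
    · intro k
      induction k using Fin.lastCases with
      | last => rw [Fin.snoc_last]; exact ha
      | cast j => rw [Fin.snoc_castSucc]; exact h1 j
    · intro k h
      by_cases hk : k + 1 < i + 1
      · have e1 : (⟨k, by omega⟩ : Fin (i + 2)) = Fin.castSucc ⟨k, by omega⟩ := rfl
        have e2 : (⟨k + 1, by omega⟩ : Fin (i + 2)) = Fin.castSucc ⟨k + 1, hk⟩ := rfl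
        rw [e1, e2, Fin.snoc_castSucc, Fin.snoc_castSucc]
        exact h2 k hk
      · have hki : k = i := by omega
        subst hki
        have e1 : (⟨k, by omega⟩ : Fin (k + 2)) = Fin.castSucc (Fin.last k) := rfl
        have e2 : (⟨k + 1, by omega⟩ : Fin (k + 2)) = Fin.last (k + 1) := rfl
        rw [e1, e2, Fin.snoc_castSucc, Fin.snoc_last]
        exact hlast

lemma card_V_succ (i : ℕ) :
    (V (i + 1)).card = ∑ a ∈ Finset.Icc (-2 : ℤ) 2, f i a := by
  apply Finset.card_eq_sum_card_fiberwise
  intro r hr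
  have hr : r ∈ V (i + 1) := hr
  simp only [V, Finset.mem_filter, Fintype.mem_piFinset] at hr
  exact hr.1 (Fin.last i)

lemma f_zero (a : ℤ) (ha : a ∈ Finset.Icc (-2 : ℤ) 2) : f 0 a = 1 := by
  have : W 0 a = {fun _ => a} := by
    ext r
    simp only [W, V, Finset.mem_filter, Fintype.mem_piFinset, Finset.mem_singleton]
    constructor
    · rintro ⟨⟨-, -⟩, h⟩
      funext k
      have : k = Fin.last 0 := by ext; omega
      rw [this, h]
    · rintro rfl
      refine ⟨⟨fun _ => ha, ?_⟩, rfl⟩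
      intro k l hkl
      have : (l : ℕ) = 0 := by omega
      omega
  rw [f, this, Finset.card_singleton]

lemma f_succ (i : ℕ) (a : ℤ) (ha : a ∈ Finset.Icc (-2 : ℤ) 2) :
    f (i + 1) a =
      ∑ b ∈ (Finset.Icc (-2 : ℤ) 2).filter (fun b => 3 ≤ |b - a|), f i b := by
  have himage : W (i + 1) a =
      Finset.image (fun q => Fin.snoc q a)
        ((V (i + 1)).filter (fun q => 3 ≤ |q (Fin.last i) - a| ∧ a ∈ Finset.Icc (-2:ℤ) 2)) := by
    ext r
    simp only [W, Finset.mem_filter, Finset.mem_image]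
    constructor
    · rintro ⟨hr, hlast⟩
      refine ⟨Fin.init r, ?_, ?_⟩
      · have hsnoc : Fin.snoc (Fin.init r) (r (Fin.last (i + 1))) = r := Fin.snoc_init_self r
        rw [hlast] at hsnoc
        rw [← hsnoc] at hr
        have := (mem_snoc_iff (Fin.init r) a).mp hr
        exact ⟨this.1, this.2.2, this.2.1⟩
      · have hsnoc : Fin.snoc (Fin.init r) (r (Fin.last (i + 1))) = r := Fin.snoc_init_self r
        rw [hlast] at hsnoc
        exact hsnoc
    · rintro ⟨q, ⟨hq, h3, ha⟩, rfl⟩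
      exact ⟨(mem_snoc_iff q a).mpr ⟨hq, ha, h3⟩, by simp⟩
  rw [f, himage, Finset.card_image_of_injective _ (fun q q' h => by
    have := congrArg Fin.init h
    rwa [Fin.init_snoc, Fin.init_snoc] at this)]
  have : ((V (i + 1)).filter (fun q => 3 ≤ |q (Fin.last i) - a| ∧ a ∈ Finset.Icc (-2:ℤ) 2))
      = ((V (i + 1)).filter (fun q => 3 ≤ |q (Fin.last i) - a|)) := by
    apply Finset.filter_congr
    intro q _
    simp [ha]
  rw [this]
  apply Finset.card_eq_sum_card_fiberwise (f := fun q => q (Fin.last i))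
    (t := (Finset.Icc (-2 : ℤ) 2).filter (fun b => 3 ≤ |b - a|)) ?_ |>.trans
  · apply Finset.sum_congr rfl
    intro b hb
    congr 1
    rw [Finset.filter_filter]
    unfold W
    apply Finset.filter_congr
    intro q _
    simp only [Finset.mem_filter, Finset.mem_Icc] at hb ⊢
    constructor
    · rintro ⟨-, h⟩; exact h
    · rintro rfl; exact ⟨hb.2, rfl⟩
  · intro q hq
    have hq : q ∈ (V (i + 1)).filter (fun q => 3 ≤ |q (Fin.last i) - a|) := hq
    show q (Fin.last i) ∈ (Finset.Icc (-2 : ℤ) 2).filter (fun b => 3 ≤ |b - a|)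
    simp only [Finset.mem_filter] at hq ⊢
    refine ⟨?_, hq.2⟩
    have := hq.1
    simp only [V, Finset.mem_filter, Fintype.mem_piFinset] at this
    exact this.1 (Fin.last i)

lemma filt2 : (Finset.Icc (-2:ℤ) 2).filter (fun b => 3 ≤ |b - 2|) = {-2, -1} := by
  ext b
  simp only [Finset.mem_filter, Finset.mem_Icc, le_abs, Finset.mem_insert,
    Finset.mem_singleton]
  omega

lemma filt1 : (Finset.Icc (-2:ℤ) 2).filter (fun b => 3 ≤ |b - 1|) = {-2} := by
  ext b
  simp only [Finset.mem_filter, Finset.mem_Icc, le_abs, Finset.mem_singleton]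
  omega

lemma filt0 : (Finset.Icc (-2:ℤ) 2).filter (fun b => 3 ≤ |b - 0|) = ∅ := by
  ext b
  simp only [Finset.mem_filter, Finset.mem_Icc, le_abs, Finset.notMem_empty, iff_false,
    not_and]
  omega

lemma filtm1 : (Finset.Icc (-2:ℤ) 2).filter (fun b => 3 ≤ |b - (-1)|) = {2} := by
  ext b
  simp only [Finset.mem_filter, Finset.mem_Icc, le_abs, Finset.mem_singleton]
  omega

lemma filtm2 : (Finset.Icc (-2:ℤ) 2).filter (fun b => 3 ≤ |b - (-2)|) = {1, 2} := by
  ext b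
  simp only [Finset.mem_filter, Finset.mem_Icc, le_abs, Finset.mem_insert,
    Finset.mem_singleton]
  omega

lemma mem_Icc' (a : ℤ) (h1 : -2 ≤ a) (h2 : a ≤ 2) : a ∈ Finset.Icc (-2:ℤ) 2 :=
  Finset.mem_Icc.mpr ⟨h1, h2⟩

lemma f_vals (n : ℕ) :
    f (n+1) 2 = Nat.fib (n+3) ∧ f (n+1) (-2) = Nat.fib (n+3) ∧
    f (n+1) 1 = Nat.fib (n+2) ∧ f (n+1) (-1) = Nat.fib (n+2) ∧ f (n+1) 0 = 0 := by
  induction n with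
  | zero =>
    refine ⟨?_, ?_, ?_, ?_, ?_⟩
    · rw [f_succ 0 2 (by norm_num), filt2,
        Finset.sum_pair (by norm_num), f_zero _ (by norm_num), f_zero _ (by norm_num)]
      decide
    · rw [f_succ 0 (-2) (by norm_num), filtm2,
        Finset.sum_pair (by norm_num), f_zero _ (by norm_num), f_zero _ (by norm_num)]
      decide
    · rw [f_succ 0 1 (by norm_num), filt1, Finset.sum_singleton, f_zero _ (by norm_num)]
      decide
    · rw [f_succ 0 (-1) (by norm_num), filtm1, Finset.sum_singleton, f_zero _ (by norm_num)]
      decide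
    · rw [f_succ 0 0 (by norm_num), filt0, Finset.sum_empty]
  | succ n ih =>
    obtain ⟨h2, hm2, h1, hm1, h0⟩ := ih
    refine ⟨?_, ?_, ?_, ?_, ?_⟩
    · rw [f_succ (n+1) 2 (by norm_num), filt2, Finset.sum_pair (by norm_num), hm2, hm1]
      have e := Nat.fib_add_two (n := n + 2)
      rw [show n+2+2 = n+1+3 by omega, show n+2+1 = n+3 by omega] at e
      omega
    · rw [f_succ (n+1) (-2) (by norm_num), filtm2, Finset.sum_pair (by norm_num), h1, h2]
      have e := Nat.fib_add_two (n := n + 2)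
      rw [show n+2+2 = n+1+3 by omega, show n+2+1 = n+3 by omega] at e
      omega
    · rw [f_succ (n+1) 1 (by norm_num), filt1, Finset.sum_singleton, hm2]
    · rw [f_succ (n+1) (-1) (by norm_num), filtm1, Finset.sum_singleton, h2]
    · rw [f_succ (n+1) 0 (by norm_num), filt0, Finset.sum_empty]

lemma Icc_expand : Finset.Icc (-2:ℤ) 2 = {-2, -1, 0, 1, 2} := by
  ext b
  simp only [Finset.mem_Icc, Finset.mem_insert, Finset.mem_singleton]
  omega

lemma main_count (n : ℕ) : carryCount 5 (n + 2) = 2 * Nat.fib (n + 4) := by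
  obtain ⟨h2, hm2, h1, hm1, h0⟩ := f_vals n
  rw [carryCount_eq, card_V_succ, Icc_expand]
  rw [Finset.sum_insert (by norm_num), Finset.sum_insert (by norm_num),
    Finset.sum_insert (by norm_num), Finset.sum_insert (by norm_num),
    Finset.sum_singleton, hm2, hm1, h0, h1, h2]
  have e := Nat.fib_add_two (n := n + 2)
  rw [show n+2+2 = n+4 by omega, show n+2+1 = n+3 by omega] at e
  omega

end Stmt19Aux

theorem stmt19 (i : ℕ) (hi : 2 ≤ i) :
    carryCount 5 i = 2 * Nat.fib (i + 2) ∧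
    (carryCount 5 i : ℝ) / 5 ^ i = 2 * (Nat.fib (i + 2) : ℝ) / 5 ^ i := by
  obtain ⟨n, rfl⟩ : ∃ n, i = n + 2 := ⟨i - 2, by omega⟩
  have h := Stmt19Aux.main_count n
  refine ⟨h, ?_⟩
  rw [h]
  push_cast
  ring
end
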